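/- The set {X ∈ 𝒢 : X̂ V = V X for all V ∈ 𝒢^1} is equal to Λ_r. -/

import Mathlib

open Pointwise

noncomputable section

namespace ClGA

variable (𝔽 : Type*) [RCLike 𝔽] (p q r : ℕ)

/-- The diagonal weights: `p` ones, `q` minus-ones, `r` zeros. -/
def w : Fin (p + q + r) → 𝔽 := fun i =>
  if (i : ℕ) < p then 1 else if (i : ℕ) < p + q then -1 else 0

/-- The quadratic form on `𝔽^n` whose Gram matrix is `diag(1,…,1,−1,…,−1,0,…,0)`. -/
def Q : QuadraticForm 𝔽 (Fin (p + q + r) → 𝔽) :=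
  QuadraticMap.weightedSumSquares 𝔽 (w 𝔽 p q r)

/-- The degenerate Clifford geometric algebra `𝒢 = 𝒢_{p,q,r}`. -/
abbrev G := CliffordAlgebra (Q 𝔽 p q r)

/-- The generators `e_a`, `a = 1, …, n`. -/
def e (a : Fin (p + q + r)) : G 𝔽 p q r :=
  CliffordAlgebra.ι (Q 𝔽 p q r) (Pi.single a 1)

/-- The even subspace `𝒢^{(0)}`: the `+1`-eigenspace of the grade involution. -/
def Geven : Submodule 𝔽 (G 𝔽 p q r) where
  carrier := {x | CliffordAlgebra.involute x = x}
  add_mem' := by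
    intro a b ha hb
    simp only [Set.mem_setOf_eq, map_add] at ha hb ⊢
    rw [ha, hb]
  zero_mem' := by simp
  smul_mem' := by
    intro c x hx
    simp only [Set.mem_setOf_eq, map_smul] at hx ⊢
    rw [hx]

/-- The odd subspace `𝒢^{(1)}`: the `−1`-eigenspace of the grade involution. -/
def Godd : Submodule 𝔽 (G 𝔽 p q r) where
  carrier := {x | CliffordAlgebra.involute x = -x}
  add_mem' := by
    intro a b ha hb
    simp only [Set.mem_setOf_eq, map_add] at ha hb ⊢
    rw [ha, hb, neg_add]
  zero_mem' := by simp
  smul_mem' := by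
    intro c x hx
    simp only [Set.mem_setOf_eq, map_smul] at hx ⊢
    rw [hx, smul_neg]

/-- The grade-1 subspace `𝒢^1`, the span of the generators. -/
def G1 : Submodule 𝔽 (G 𝔽 p q r) := Submodule.span 𝔽 (Set.range (e 𝔽 p q r))

/-- The scalar (grade-0) subspace `𝒢^0 = 𝔽·1`. -/
def G0 : Submodule 𝔽 (G 𝔽 p q r) := Submodule.span 𝔽 {(1 : G 𝔽 p q r)}

/-- The element `e_{1…n} = e_1 e_2 ⋯ e_n`. -/
def eTop : G 𝔽 p q r := (List.ofFn (e 𝔽 p q r)).prod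

/-- The grade-`n` subspace `𝒢^n = 𝔽·e_{1…n}`. -/
def Gn : Submodule 𝔽 (G 𝔽 p q r) := Submodule.span 𝔽 {eTop 𝔽 p q r}

/-- The Grassmann subalgebra `Λ_r` generated by the null generators. -/
def Λr : Subalgebra 𝔽 (G 𝔽 p q r) :=
  Algebra.adjoin 𝔽 {x | ∃ a : Fin (p + q + r), p + q ≤ (a : ℕ) ∧ x = e 𝔽 p q r a}

/-- `Λ_r` viewed as a subspace of `𝒢`. -/
def Λrs : Submodule 𝔽 (G 𝔽 p q r) := Subalgebra.toSubmodule (Λr 𝔽 p q r)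

/-- The even part `Λ_r^{(0)} = Λ_r ∩ 𝒢^{(0)}`. -/
def Λr0 : Submodule 𝔽 (G 𝔽 p q r) := Λrs 𝔽 p q r ⊓ Geven 𝔽 p q r

/-- The Jacobson radical `rad 𝒢` of `𝒢`: the two-sided ideal generated by the
null generators. -/
def radG : Submodule 𝔽 (G 𝔽 p q r) :=
  Submodule.span 𝔽 {x | ∃ (u v : G 𝔽 p q r) (a : Fin (p + q + r)),
    p + q ≤ (a : ℕ) ∧ x = u * e 𝔽 p q r a * v}

/-- `rad 𝒢^{(0)} = rad 𝒢 ∩ 𝒢^{(0)}`. -/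
def radG0 : Submodule 𝔽 (G 𝔽 p q r) := radG 𝔽 p q r ⊓ Geven 𝔽 p q r

/-- For a subset `S ⊆ 𝒢`, `S^×` denotes those elements of `S` invertible in `𝒢`. -/
def ux (S : Set (G 𝔽 p q r)) : Set (G 𝔽 p q r) := {x ∈ S | IsUnit x}

/-- `𝒢^{(0)×} ∪ 𝒢^{(1)×}` (the group `P^±_{p,q,r}`). -/
def Epm : Set (G 𝔽 p q r) :=
  ux 𝔽 p q r ↑(Geven 𝔽 p q r) ∪ ux 𝔽 p q r ↑(Godd 𝔽 p q r)

/-- `(T⁻¹)^̂ · T`, the grade involution of the inverse times `T`. -/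
def tw (T : G 𝔽 p q r) : G 𝔽 p q r :=
  CliffordAlgebra.involute (Ring.inverse T) * T

/-- The invertible elements `T` with `T W T⁻¹ ⊆ W` (adjoint representation). -/
def gammaAd (W : Submodule 𝔽 (G 𝔽 p q r)) : Set (G 𝔽 p q r) :=
  {T | IsUnit T ∧ ∀ U ∈ W, T * U * Ring.inverse T ∈ W}

/-- The invertible elements `T` with `T̂ W T⁻¹ ⊆ W` (twisted adjoint representation). -/
def gammaTw (W : Submodule 𝔽 (G 𝔽 p q r)) : Set (G 𝔽 p q r) :=
  {T | IsUnit T ∧ ∀ U ∈ W, CliffordAlgebra.involute T * U * Ring.inverse T ∈ W}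


-- ### basic generator lemmas

lemma Q_single (a : Fin (p + q + r)) : Q 𝔽 p q r (Pi.single a 1) = w 𝔽 p q r a := by
  rw [Q, QuadraticMap.weightedSumSquares_apply, Finset.sum_eq_single a]
  · simp
  · intro b _ hb; simp [Pi.single_apply, hb]
  · simp

lemma e_sq (a : Fin (p + q + r)) :
    e 𝔽 p q r a * e 𝔽 p q r a = algebraMap 𝔽 (G 𝔽 p q r) (w 𝔽 p q r a) := by
  rw [e, CliffordAlgebra.ι_sq_scalar, Q_single]

lemma single_ortho {a b : Fin (p + q + r)} (hab : a ≠ b) :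
    (Q 𝔽 p q r).IsOrtho (Pi.single a 1) (Pi.single b 1) := by
  rw [QuadraticMap.isOrtho_def]
  simp only [Q, QuadraticMap.weightedSumSquares_apply, ← Finset.sum_add_distrib]
  refine Finset.sum_congr rfl fun i _ => ?_
  rcases eq_or_ne i a with h | h <;> rcases eq_or_ne i b with h' | h' <;>
    simp_all [Pi.single_apply]

lemma e_anticomm {a b : Fin (p + q + r)} (hab : a ≠ b) :
    e 𝔽 p q r a * e 𝔽 p q r b = -(e 𝔽 p q r b * e 𝔽 p q r a) :=
  CliffordAlgebra.ι_mul_ι_comm_of_isOrtho (single_ortho 𝔽 p q r hab)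

lemma w_zero {a : Fin (p + q + r)} (ha : p + q ≤ (a : ℕ)) : w 𝔽 p q r a = 0 := by
  rw [w, if_neg (by omega), if_neg (by omega)]

lemma w_ne {a : Fin (p + q + r)} (ha : (a : ℕ) < p + q) : w 𝔽 p q r a ≠ 0 := by
  rw [w]; split_ifs <;> simp

-- ### the toggle operation and signs

def dd (a : Fin (p + q + r)) (S : Finset (Fin (p + q + r))) : Finset (Fin (p + q + r)) :=
  if a ∈ S then S.erase a else insert a S

lemma mem_dd {a x : Fin (p + q + r)} {S : Finset (Fin (p + q + r))} :
    x ∈ dd p q r a S ↔ (x = a ∧ a ∉ S) ∨ (x ≠ a ∧ x ∈ S) := by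
  by_cases h : a ∈ S <;> by_cases hxa : x = a <;> simp [dd, h, hxa]

lemma dd_dd (a : Fin (p + q + r)) (S : Finset (Fin (p + q + r))) :
    dd p q r a (dd p q r a S) = S := by
  by_cases h : a ∈ S
  · simp [dd, h, Finset.notMem_erase, Finset.insert_erase]
  · simp [dd, h, Finset.erase_insert]

lemma a_mem_dd (a : Fin (p + q + r)) (S : Finset (Fin (p + q + r))) :
    a ∈ dd p q r a S ↔ a ∉ S := by
  simp [mem_dd]

lemma mem_dd_ne {a b : Fin (p + q + r)} (hab : a ≠ b) (S : Finset (Fin (p + q + r))) :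
    b ∈ dd p q r a S ↔ b ∈ S := by
  simp [mem_dd, Ne.symm hab]

lemma dd_comm {a b : Fin (p + q + r)} (hab : a ≠ b) (S : Finset (Fin (p + q + r))) :
    dd p q r a (dd p q r b S) = dd p q r b (dd p q r a S) := by
  ext x
  simp only [mem_dd]
  by_cases h1 : x = a <;> by_cases h2 : x = b <;> by_cases h3 : a ∈ S <;>
    by_cases h4 : b ∈ S <;> simp_all <;> tauto

def sg (a : Fin (p + q + r)) (S : Finset (Fin (p + q + r))) : 𝔽 :=
  (-1) ^ (S.filter (· < a)).card

lemma sg_dd {a b : Fin (p + q + r)} (hab : a ≠ b) (S : Finset (Fin (p + q + r))) :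
    sg 𝔽 p q r b (dd p q r a S) = (if a < b then -1 else 1) * sg 𝔽 p q r b S := by
  by_cases h : a ∈ S
  · rw [dd, if_pos h, sg, sg, Finset.filter_erase]
    by_cases hb : a < b
    · have hmem : a ∈ S.filter (· < b) := Finset.mem_filter.2 ⟨h, hb⟩
      obtain ⟨m, hm⟩ : ∃ m, (S.filter (· < b)).card = m + 1 :=
        ⟨(S.filter (· < b)).card - 1,
          (Nat.succ_pred_eq_of_pos (Finset.card_pos.2 ⟨a, hmem⟩)).symm⟩
      rw [Finset.card_erase_of_mem hmem, hm, if_pos hb]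
      simp [pow_succ]
    · have hmem : a ∉ S.filter (· < b) := fun hc => hb (Finset.mem_filter.1 hc).2
      rw [Finset.erase_eq_of_notMem hmem, if_neg hb, one_mul]
  · rw [dd, if_neg h, sg, sg, Finset.filter_insert]
    by_cases hb : a < b
    · have hmem : a ∉ S.filter (· < b) := fun hc => h (Finset.mem_filter.1 hc).1
      rw [if_pos hb, if_pos hb, Finset.card_insert_of_notMem hmem, pow_succ]
      ring
    · rw [if_neg hb, if_neg hb, one_mul]

lemma sg_dd_self (a : Fin (p + q + r)) (S : Finset (Fin (p + q + r))) :
    sg 𝔽 p q r a (dd p q r a S) = sg 𝔽 p q r a S := by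
  by_cases h : a ∈ S
  · have hnm : a ∉ S.filter (· < a) := fun hc => lt_irrefl a (Finset.mem_filter.1 hc).2
    rw [dd, if_pos h, sg, sg, Finset.filter_erase, Finset.erase_eq_of_notMem hnm]
  · rw [dd, if_neg h, sg, sg, Finset.filter_insert, if_neg (lt_irrefl a)]

lemma sg_mul_self (a : Fin (p + q + r)) (S : Finset (Fin (p + q + r))) :
    sg 𝔽 p q r a S * sg 𝔽 p q r a S = 1 := by
  rw [sg, ← pow_add]
  exact Even.neg_one_pow ⟨_, rfl⟩

-- ### the spinor representation

def sprod (l : List (Fin (p + q + r))) : G 𝔽 p q r := (l.map (e 𝔽 p q r)).prod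

abbrev MM := Finset (Fin (p + q + r)) → 𝔽

def rho (a : Fin (p + q + r)) : MM 𝔽 p q r →ₗ[𝔽] MM 𝔽 p q r where
  toFun f := fun S =>
    sg 𝔽 p q r a S * ((if a ∈ S then 1 else w 𝔽 p q r a) * f (dd p q r a S))
  map_add' f g := by funext S; simp [mul_add]
  map_smul' c f := by funext S; simp only [Pi.smul_apply, smul_eq_mul, RingHom.id_apply]; ring

lemma rho_apply (a : Fin (p + q + r)) (f : MM 𝔽 p q r) (S : Finset (Fin (p + q + r))) :
    rho 𝔽 p q r a f S
      = sg 𝔽 p q r a S * ((if a ∈ S then 1 else w 𝔽 p q r a) * f (dd p q r a S)) := rfl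

lemma rho_rho_same (a : Fin (p + q + r)) (f : MM 𝔽 p q r) :
    rho 𝔽 p q r a (rho 𝔽 p q r a f) = w 𝔽 p q r a • f := by
  funext S
  rw [Pi.smul_apply, smul_eq_mul, rho_apply, rho_apply, dd_dd, sg_dd_self]
  have hsq : sg 𝔽 p q r a S * sg 𝔽 p q r a S = 1 := sg_mul_self 𝔽 p q r a S
  by_cases h : a ∈ S
  · rw [if_pos h, if_neg (by rw [a_mem_dd]; exact not_not_intro h)]
    linear_combination (w 𝔽 p q r a * f S) * hsq
  · rw [if_neg h, if_pos ((a_mem_dd p q r a S).mpr h)]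
    linear_combination (w 𝔽 p q r a * f S) * hsq

lemma rho_anti {a b : Fin (p + q + r)} (hab : a ≠ b) (f : MM 𝔽 p q r) :
    rho 𝔽 p q r a (rho 𝔽 p q r b f) + rho 𝔽 p q r b (rho 𝔽 p q r a f) = 0 := by
  funext S
  simp only [Pi.add_apply, Pi.zero_apply, rho_apply]
  rw [dd_comm p q r (Ne.symm hab), sg_dd 𝔽 p q r hab, sg_dd 𝔽 p q r (Ne.symm hab)]
  simp only [mem_dd_ne p q r hab, mem_dd_ne p q r (Ne.symm hab)]
  rcases hab.lt_or_gt with h | h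
  · rw [if_pos h, if_neg (asymm h)]
    ring
  · rw [if_neg (asymm h), if_pos h]
    ring

def rhoV : (Fin (p + q + r) → 𝔽) →ₗ[𝔽] Module.End 𝔽 (MM 𝔽 p q r) where
  toFun v := ∑ a, v a • rho 𝔽 p q r a
  map_add' u v := by simp [add_smul, Finset.sum_add_distrib]
  map_smul' c v := by simp [Finset.smul_sum, smul_smul]

lemma rhoV_apply (v : Fin (p + q + r) → 𝔽) :
    rhoV 𝔽 p q r v = ∑ a, v a • rho 𝔽 p q r a := rfl

lemma rhoV_sq (v : Fin (p + q + r) → 𝔽) :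
    rhoV 𝔽 p q r v * rhoV 𝔽 p q r v
      = algebraMap 𝔽 (Module.End 𝔽 (MM 𝔽 p q r)) (Q 𝔽 p q r v) := by
  have opsq : ∀ a, rho 𝔽 p q r a * rho 𝔽 p q r a
      = w 𝔽 p q r a • (1 : Module.End 𝔽 (MM 𝔽 p q r)) := by
    intro a
    apply LinearMap.ext fun f => ?_
    rw [Module.End.mul_apply, rho_rho_same]
    rfl
  have opanti : ∀ a b, a ≠ b → rho 𝔽 p q r a * rho 𝔽 p q r b
      = -(rho 𝔽 p q r b * rho 𝔽 p q r a) := by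
    intro a b hab
    apply eq_neg_of_add_eq_zero_left
    apply LinearMap.ext fun f => ?_
    simp only [LinearMap.add_apply, Module.End.mul_apply, LinearMap.zero_apply]
    rw [rho_anti 𝔽 p q r hab f]
  set T : Fin (p + q + r) → Fin (p + q + r) → Module.End 𝔽 (MM 𝔽 p q r) :=
    fun a b => (v a * v b) • (rho 𝔽 p q r a * rho 𝔽 p q r b) with hT
  have expand : rhoV 𝔽 p q r v * rhoV 𝔽 p q r v = ∑ a, ∑ b, T a b := by
    rw [rhoV_apply, Finset.sum_mul_sum]
    refine Finset.sum_congr rfl fun a _ => Finset.sum_congr rfl fun b _ => ?_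
    rw [hT, smul_mul_assoc, mul_smul_comm, smul_smul]
  have hkey : ∀ a b, a ≠ b → T a b + T b a = 0 := by
    intro a b hab
    rw [hT]
    simp only
    rw [opanti a b hab, smul_neg, mul_comm (v b) (v a), neg_add_cancel]
  have hdiagsum : (∑ a, ∑ b, T a b) = ∑ a, T a a := by
    have h2 : (2 : 𝔽) • (∑ a, ∑ b, T a b) = (2 : 𝔽) • ∑ a, T a a := by
      have hcomm : (∑ a, ∑ b, T a b) = ∑ a, ∑ b, T b a := Finset.sum_comm
      calc (2 : 𝔽) • (∑ a, ∑ b, T a b)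
          = (∑ a, ∑ b, T a b) + (∑ a, ∑ b, T b a) := by rw [← hcomm, two_smul]
        _ = ∑ a, ∑ b, (T a b + T b a) := by
            rw [← Finset.sum_add_distrib]
            exact Finset.sum_congr rfl fun a _ => (Finset.sum_add_distrib).symm
        _ = ∑ a, (T a a + T a a) :=
            Finset.sum_congr rfl fun a _ => Finset.sum_eq_single a
              (fun b _ hb => hkey a b (Ne.symm hb))
              (fun h => absurd (Finset.mem_univ a) h)
        _ = (2 : 𝔽) • ∑ a, T a a := by
            simp [Finset.smul_sum, two_smul]
    exact smul_right_injective _ (two_ne_zero) h2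
  rw [expand, hdiagsum]
  have hdiag : ∀ a, T a a = (w 𝔽 p q r a * (v a * v a)) • (1 : Module.End 𝔽 (MM 𝔽 p q r)) := by
    intro a
    rw [hT]
    simp only
    rw [opsq a, smul_smul, mul_comm]
  simp_rw [hdiag]
  rw [← Finset.sum_smul, Q, QuadraticMap.weightedSumSquares_apply,
    Module.algebraMap_end_eq_smul_id]
  rfl

def rhohat : G 𝔽 p q r →ₐ[𝔽] Module.End 𝔽 (MM 𝔽 p q r) :=
  CliffordAlgebra.lift (Q 𝔽 p q r) ⟨rhoV 𝔽 p q r, rhoV_sq 𝔽 p q r⟩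

lemma rhohat_e (a : Fin (p + q + r)) : rhohat 𝔽 p q r (e 𝔽 p q r a) = rho 𝔽 p q r a := by
  rw [rhohat, e, CliffordAlgebra.lift_ι_apply, rhoV_apply, Finset.sum_eq_single a]
  · simp
  · intro b _ hb
    rw [Pi.single_eq_of_ne hb, zero_smul]
  · intro h; exact absurd (Finset.mem_univ a) h

-- ### coefficient extraction

def delta (T : Finset (Fin (p + q + r))) : MM 𝔽 p q r := fun S => if S = T then 1 else 0

def cLin : G 𝔽 p q r →ₗ[𝔽] MM 𝔽 p q r where
  toFun X := rhohat 𝔽 p q r X (delta 𝔽 p q r ∅)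
  map_add' X Y := by simp [map_add]
  map_smul' c X := by simp [map_smul]

lemma cLin_apply (X : G 𝔽 p q r) : cLin 𝔽 p q r X = rhohat 𝔽 p q r X (delta 𝔽 p q r ∅) := rfl

lemma rho_delta (a : Fin (p + q + r)) (S : Finset (Fin (p + q + r)))
    (h : ∀ b ∈ S, a < b) :
    rho 𝔽 p q r a (delta 𝔽 p q r S) = delta 𝔽 p q r (insert a S) := by
  have haS : a ∉ S := fun hmem => lt_irrefl a (h a hmem)
  funext T
  rw [rho_apply]
  by_cases hT : T = insert a S
  · subst hT
    have h1 : a ∈ insert a S := Finset.mem_insert_self a S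
    have h2 : dd p q r a (insert a S) = S := by
      rw [dd, if_pos h1, Finset.erase_insert haS]
    have h3 : (insert a S).filter (· < a) = ∅ := by
      rw [Finset.filter_eq_empty_iff]
      intro b hb
      rcases Finset.mem_insert.1 hb with rfl | hb'
      · exact lt_irrefl b
      · exact asymm (h b hb')
    rw [if_pos h1, h2, sg, h3]
    simp [delta]
  · have hdd : dd p q r a S = insert a S := by rw [dd, if_neg haS]
    have h4 : dd p q r a T ≠ S := by
      intro hc
      exact hT (by rw [← dd_dd p q r a T, hc, hdd])
    have h5 : delta 𝔽 p q r S (dd p q r a T) = 0 := by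
      rw [delta]; exact if_neg h4
    rw [h5, delta]
    rw [if_neg hT]
    ring

lemma cLin_sprod (l : List (Fin (p + q + r))) (hl : l.Pairwise (· < ·)) :
    cLin 𝔽 p q r (sprod 𝔽 p q r l) = delta 𝔽 p q r l.toFinset := by
  induction l with
  | nil =>
    have h1 : sprod 𝔽 p q r [] = 1 := by simp [sprod]
    rw [h1, cLin_apply, map_one, Module.End.one_apply, List.toFinset_nil]
  | cons a t ih =>
    have ht : t.Pairwise (· < ·) := (List.pairwise_cons.mp hl).2
    have ha : ∀ b ∈ t.toFinset, a < b := fun b hb =>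
      (List.pairwise_cons.mp hl).1 b (List.mem_toFinset.mp hb)
    have hsp : sprod 𝔽 p q r (a :: t) = e 𝔽 p q r a * sprod 𝔽 p q r t := by simp [sprod]
    rw [hsp, cLin_apply, map_mul, Module.End.mul_apply, ← cLin_apply, ih ht, rhohat_e,
      rho_delta 𝔽 p q r a t.toFinset ha, List.toFinset_cons]

def eS (S : Finset (Fin (p + q + r))) : G 𝔽 p q r := sprod 𝔽 p q r (S.sort (· ≤ ·))

lemma cLin_eS (S : Finset (Fin (p + q + r))) : cLin 𝔽 p q r (eS 𝔽 p q r S) = delta 𝔽 p q r S := by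
  rw [eS, cLin_sprod 𝔽 p q r _ ((Finset.sortedLT_sort S).pairwise), Finset.sort_toFinset]

lemma sum_smul_delta (f : MM 𝔽 p q r) : (∑ S, f S • delta 𝔽 p q r S) = f := by
  funext T
  rw [Finset.sum_apply, Finset.sum_eq_single T]
  · simp [delta]
  · intro S _ hS
    have h0 : delta 𝔽 p q r S T = 0 := if_neg (Ne.symm hS)
    simp [Pi.smul_apply, h0]
  · intro h; exact absurd (Finset.mem_univ T) h

-- ### spanning

def NN : Submodule 𝔽 (G 𝔽 p q r) := Submodule.span 𝔽 (Set.range (eS 𝔽 p q r))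

lemma sprod_mem_range {l : List (Fin (p + q + r))} (hl : l.Pairwise (· < ·)) :
    sprod 𝔽 p q r l ∈ Set.range (eS 𝔽 p q r) :=
  ⟨l.toFinset, by rw [eS, (List.toFinset_sort (· ≤ ·) hl.nodup).mpr (hl.imp le_of_lt)]⟩

lemma sprod_cons (a : Fin (p + q + r)) (l : List (Fin (p + q + r))) :
    sprod 𝔽 p q r (a :: l) = e 𝔽 p q r a * sprod 𝔽 p q r l := by
  simp [sprod]

lemma L1 (l : List (Fin (p + q + r))) (hl : l.Pairwise (· < ·)) (a : Fin (p + q + r)) :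
    e 𝔽 p q r a * sprod 𝔽 p q r l ∈ Submodule.span 𝔽
      {x | ∃ l', l'.Pairwise (· < ·) ∧ (∀ i ∈ l', i = a ∨ i ∈ l) ∧ x = sprod 𝔽 p q r l'} := by
  induction l generalizing a with
  | nil =>
    refine Submodule.subset_span ⟨[a], List.pairwise_singleton _ a, ?_, ?_⟩
    · intro i hi
      rcases List.mem_singleton.mp hi with rfl
      exact Or.inl rfl
    · rw [sprod_cons]
  | cons b t ih =>
    have hbt : ∀ c ∈ t, b < c := (List.pairwise_cons.mp hl).1
    have ht : t.Pairwise (· < ·) := (List.pairwise_cons.mp hl).2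
    rcases lt_trichotomy a b with h | h | h
    · refine Submodule.subset_span ⟨a :: b :: t, ?_, ?_, ?_⟩
      · refine List.pairwise_cons.mpr ⟨?_, hl⟩
        intro c hc
        rcases List.mem_cons.mp hc with rfl | hc'
        · exact h
        · exact h.trans (hbt c hc')
      · intro i hi
        rcases List.mem_cons.mp hi with rfl | hi'
        · exact Or.inl rfl
        · exact Or.inr hi'
      · simp [sprod]
    · subst h
      rw [sprod_cons, ← mul_assoc, e_sq, ← Algebra.smul_def]
      exact Submodule.smul_mem _ _ (Submodule.subset_span
        ⟨t, ht, fun i hi => Or.inr (List.mem_cons_of_mem _ hi), rfl⟩)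
    · have key : e 𝔽 p q r a * sprod 𝔽 p q r (b :: t)
          = -(e 𝔽 p q r b * (e 𝔽 p q r a * sprod 𝔽 p q r t)) := by
        rw [sprod_cons, ← mul_assoc, e_anticomm 𝔽 p q r (ne_of_gt h), neg_mul, mul_assoc]
      rw [key]
      refine neg_mem ?_
      have hIH := ih ht a
      have hgen : ∀ x ∈ {x | ∃ l', l'.Pairwise (· < ·) ∧ (∀ i ∈ l', i = a ∨ i ∈ t)
          ∧ x = sprod 𝔽 p q r l'},
          e 𝔽 p q r b * x ∈ Submodule.span 𝔽
            {x | ∃ l', l'.Pairwise (· < ·) ∧ (∀ i ∈ l', i = a ∨ i ∈ b :: t)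
              ∧ x = sprod 𝔽 p q r l'} := by
        rintro x ⟨l', hl', hmem, rfl⟩
        have hbl' : ∀ i ∈ l', b < i := by
          intro i hi
          rcases hmem i hi with rfl | h'
          · exact h
          · exact hbt i h'
        refine Submodule.subset_span ⟨b :: l', List.pairwise_cons.mpr ⟨hbl', hl'⟩, ?_,
          (sprod_cons 𝔽 p q r b l').symm⟩
        intro i hi
        rcases List.mem_cons.mp hi with rfl | hi'
        · exact Or.inr ((List.mem_cons_self (a := i) (l := t)))
        · rcases hmem i hi' with rfl | h'
          · exact Or.inl rfl
          · exact Or.inr (List.mem_cons_of_mem _ h')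
      refine Submodule.span_induction hgen ?_ ?_ ?_ hIH
      · rw [mul_zero]; exact zero_mem _
      · intro x y _ _ hx hy
        rw [mul_add]; exact add_mem hx hy
      · intro c x _ hx
        rw [mul_smul_comm]; exact Submodule.smul_mem _ _ hx

lemma N_mulE (a : Fin (p + q + r)) {x : G 𝔽 p q r} (hx : x ∈ NN 𝔽 p q r) :
    e 𝔽 p q r a * x ∈ NN 𝔽 p q r := by
  refine Submodule.span_induction ?_ ?_ ?_ ?_ hx
  · rintro _ ⟨S, rfl⟩
    have h := L1 𝔽 p q r (S.sort (· ≤ ·)) ((Finset.sortedLT_sort S).pairwise) a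
    have hsub : {x | ∃ l', l'.Pairwise (· < ·) ∧ (∀ i ∈ l', i = a ∨ i ∈ S.sort (· ≤ ·))
        ∧ x = sprod 𝔽 p q r l'} ⊆ Set.range (eS 𝔽 p q r) := by
      rintro x ⟨l', hl', _, rfl⟩
      exact sprod_mem_range 𝔽 p q r hl'
    exact Submodule.span_le.mpr (fun y hy => Submodule.subset_span (hsub hy)) h
  · rw [mul_zero]; exact zero_mem _
  · intro x y _ _ hx hy
    rw [mul_add]; exact add_mem hx hy
  · intro c x _ hx
    rw [mul_smul_comm]; exact Submodule.smul_mem _ _ hx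

lemma iota_eq (v : Fin (p + q + r) → 𝔽) :
    CliffordAlgebra.ι (Q 𝔽 p q r) v = ∑ a, v a • e 𝔽 p q r a := by
  conv_lhs => rw [← Finset.univ_sum_single v]
  rw [map_sum]
  refine Finset.sum_congr rfl fun a _ => ?_
  rw [e, ← map_smul]
  congr 1
  funext j
  rcases eq_or_ne j a with rfl | h
  · simp
  · simp [Pi.single_eq_of_ne h]

lemma N_iota (v : Fin (p + q + r) → 𝔽) {x : G 𝔽 p q r} (hx : x ∈ NN 𝔽 p q r) :
    CliffordAlgebra.ι (Q 𝔽 p q r) v * x ∈ NN 𝔽 p q r := by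
  rw [iota_eq, Finset.sum_mul]
  exact Submodule.sum_mem _ fun a _ => by
    rw [smul_mul_assoc]
    exact Submodule.smul_mem _ _ (N_mulE 𝔽 p q r a hx)

lemma N_one : (1 : G 𝔽 p q r) ∈ NN 𝔽 p q r := by
  refine Submodule.subset_span ⟨∅, ?_⟩
  rw [eS, Finset.sort_empty]
  simp [sprod]

lemma N_top (X : G 𝔽 p q r) : X ∈ NN 𝔽 p q r := by
  have h : ∀ Y : G 𝔽 p q r, ∀ x ∈ NN 𝔽 p q r, Y * x ∈ NN 𝔽 p q r := by
    intro Y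
    induction Y using CliffordAlgebra.induction with
    | algebraMap c => intro x hx; rw [← Algebra.smul_def]; exact Submodule.smul_mem _ _ hx
    | ι v => intro x hx; exact N_iota 𝔽 p q r v hx
    | mul y z hy hz => intro x hx; rw [mul_assoc]; exact hy _ (hz _ hx)
    | add y z hy hz => intro x hx; rw [add_mul]; exact add_mem (hy x hx) (hz x hx)
  simpa using h X 1 (N_one 𝔽 p q r)

-- ### sign lemmas

lemma involute_e (a : Fin (p + q + r)) :
    CliffordAlgebra.involute (e 𝔽 p q r a) = -(e 𝔽 p q r a) := by
  rw [e, CliffordAlgebra.involute_ι]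

lemma e_comm_prod (a : Fin (p + q + r)) (l : List (Fin (p + q + r))) (hal : a ∉ l) :
    e 𝔽 p q r a * sprod 𝔽 p q r l
      = ((-1 : 𝔽) ^ l.length) • (sprod 𝔽 p q r l * e 𝔽 p q r a) := by
  induction l with
  | nil => simp [sprod]
  | cons b t ih =>
    have hab : a ≠ b := fun h => hal (h ▸ (List.mem_cons_self (a := a) (l := t)))
    have hat : a ∉ t := fun h => hal (List.mem_cons_of_mem _ h)
    rw [sprod_cons, ← mul_assoc, e_anticomm 𝔽 p q r hab, neg_mul, mul_assoc, ih hat,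
      mul_smul_comm, ← mul_assoc, ← sprod_cons, List.length_cons, pow_succ, ← neg_smul]
    congr 1
    ring

lemma prod_comm_e (a : Fin (p + q + r)) (l : List (Fin (p + q + r))) (hal : a ∉ l) :
    sprod 𝔽 p q r l * e 𝔽 p q r a
      = ((-1 : 𝔽) ^ l.length) • (e 𝔽 p q r a * sprod 𝔽 p q r l) := by
  rw [e_comm_prod 𝔽 p q r a l hal, smul_smul, ← pow_add, Even.neg_one_pow ⟨_, rfl⟩, one_smul]

lemma involute_sprod (l : List (Fin (p + q + r))) :
    CliffordAlgebra.involute (sprod 𝔽 p q r l) = ((-1 : 𝔽) ^ l.length) • sprod 𝔽 p q r l := by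
  induction l with
  | nil => simp [sprod]
  | cons b t ih =>
    rw [sprod_cons, map_mul, involute_e, ih, List.length_cons, pow_succ, neg_mul,
      mul_smul_comm, ← sprod_cons, ← neg_smul]
    congr 1
    ring

lemma sandwich (a : Fin (p + q + r)) (l : List (Fin (p + q + r))) (hnd : l.Nodup) :
    e 𝔽 p q r a * CliffordAlgebra.involute (sprod 𝔽 p q r l) * e 𝔽 p q r a
      = (if a ∈ l then -(w 𝔽 p q r a) else w 𝔽 p q r a) • sprod 𝔽 p q r l := by
  induction l with
  | nil =>
    have h1 : sprod 𝔽 p q r ([] : List (Fin (p + q + r))) = 1 := by simp [sprod]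
    rw [h1, map_one, mul_one, e_sq, Algebra.algebraMap_eq_smul_one]
    simp
  | cons b t ih =>
    have hbt : b ∉ t := (List.nodup_cons.mp hnd).1
    have hnt : t.Nodup := (List.nodup_cons.mp hnd).2
    rcases eq_or_ne a b with rfl | hab
    · -- a = b, a ∉ t
      rw [sprod_cons, map_mul, involute_e, involute_sprod, if_pos ((List.mem_cons_self (a := a) (l := t)))]
      have hstep : ∀ (c : 𝔽) (Y : G 𝔽 p q r),
          e 𝔽 p q r a * (-e 𝔽 p q r a * (c • Y)) * e 𝔽 p q r a
            = -(c • ((e 𝔽 p q r a * e 𝔽 p q r a) * (Y * e 𝔽 p q r a))) := by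
        intro c Y
        simp only [mul_neg, neg_mul, mul_smul_comm, smul_mul_assoc, smul_neg, neg_smul,
          mul_assoc]
      rw [hstep, e_sq, prod_comm_e 𝔽 p q r a t hbt, ← Algebra.smul_def, smul_smul, smul_smul,
        ← neg_smul]
      congr 1
      have hk : ((-1 : 𝔽) ^ t.length) * ((-1 : 𝔽) ^ t.length) = 1 := by
        rw [← pow_add]; exact Even.neg_one_pow ⟨_, rfl⟩
      linear_combination (-(w 𝔽 p q r a)) * hk
    · rw [sprod_cons, map_mul, involute_e]
      have h1 : e 𝔽 p q r a * -e 𝔽 p q r b = e 𝔽 p q r b * e 𝔽 p q r a := by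
        rw [mul_neg, e_anticomm 𝔽 p q r hab, neg_neg]
      rw [← mul_assoc, h1, mul_assoc (e 𝔽 p q r b), mul_assoc (e 𝔽 p q r b),
        ih hnt, mul_smul_comm]
      simp [List.mem_cons, hab]

lemma sprod_mem_Lr (l : List (Fin (p + q + r))) (hl : ∀ i ∈ l, p + q ≤ (i : ℕ)) :
    sprod 𝔽 p q r l ∈ Λr 𝔽 p q r := by
  induction l with
  | nil =>
    have h1 : sprod 𝔽 p q r ([] : List (Fin (p + q + r))) = 1 := by simp [sprod]
    rw [h1]; exact one_mem _
  | cons b t ih =>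
    rw [sprod_cons]
    exact mul_mem (Algebra.subset_adjoin ⟨b, hl b ((List.mem_cons_self (a := b) (l := t))), rfl⟩)
      (ih fun i hi => hl i (List.mem_cons_of_mem _ hi))

/-- `{X ∈ 𝒢 : X̂ V = V X for all V ∈ 𝒢^1} = Λ_r`. -/
theorem stmt1 (hn : 1 ≤ p + q + r) :
    {X : G 𝔽 p q r | ∀ V ∈ G1 𝔽 p q r, CliffordAlgebra.involute X * V = V * X}
      = (Λr 𝔽 p q r : Set (G 𝔽 p q r)) := by
  ext X
  simp only [Set.mem_setOf_eq, SetLike.mem_coe]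
  constructor
  · intro hX
    obtain ⟨lam, hlam⟩ := (Submodule.mem_span_range_iff_exists_fun 𝔽).mp (N_top 𝔽 p q r X)
    have hcX : cLin 𝔽 p q r X = lam := by
      rw [← hlam, map_sum]
      simp_rw [map_smul, cLin_eS]
      exact sum_smul_delta 𝔽 p q r lam
    have hvanish : ∀ a : Fin (p + q + r), (a : ℕ) < p + q →
        ∀ T : Finset (Fin (p + q + r)), a ∈ T → lam T = 0 := by
      intro a ha T haT
      have hVa : e 𝔽 p q r a ∈ G1 𝔽 p q r := Submodule.subset_span ⟨a, rfl⟩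
      have h0 : CliffordAlgebra.involute X * e 𝔽 p q r a = e 𝔽 p q r a * X := hX _ hVa
      have h1 : e 𝔽 p q r a * CliffordAlgebra.involute X * e 𝔽 p q r a = w 𝔽 p q r a • X := by
        rw [mul_assoc, h0, ← mul_assoc, e_sq, ← Algebra.smul_def]
      have hsand : ∀ S : Finset (Fin (p + q + r)),
          e 𝔽 p q r a * CliffordAlgebra.involute (eS 𝔽 p q r S) * e 𝔽 p q r a
            = (if a ∈ S then -(w 𝔽 p q r a) else w 𝔽 p q r a) • eS 𝔽 p q r S := by
        intro S
        rw [eS, sandwich 𝔽 p q r a _ (Finset.sort_nodup _ _)]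
        congr 1
        simp [Finset.mem_sort]
      have h2 : (∑ S, lam S •
          ((if a ∈ S then -(w 𝔽 p q r a) else w 𝔽 p q r a) • eS 𝔽 p q r S))
          = w 𝔽 p q r a • X := by
        rw [← h1, ← hlam, map_sum, Finset.mul_sum, Finset.sum_mul]
        refine Finset.sum_congr rfl fun S _ => ?_
        rw [map_smul, mul_smul_comm, smul_mul_assoc, hsand S]
      have h3 : (fun S => lam S * (if a ∈ S then -(w 𝔽 p q r a) else w 𝔽 p q r a))
          = w 𝔽 p q r a • lam := by
        have hc := congrArg (cLin 𝔽 p q r) h2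
        rw [map_sum, map_smul, hcX] at hc
        simp_rw [map_smul, cLin_eS, smul_smul] at hc
        rwa [sum_smul_delta] at hc
      have h4 := congrFun h3 T
      simp only [if_pos haT, Pi.smul_apply, smul_eq_mul] at h4
      have h5 : (2 : 𝔽) * (w 𝔽 p q r a * lam T) = 0 := by linear_combination (-1 : 𝔽) * h4
      rcases mul_eq_zero.mp h5 with h6 | h6
      · exact absurd h6 two_ne_zero
      · rcases mul_eq_zero.mp h6 with h7 | h7
        · exact absurd h7 (w_ne 𝔽 p q r ha)
        · exact h7
    rw [← hlam]
    refine sum_mem fun S _ => ?_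
    by_cases hS : ∀ i ∈ S, p + q ≤ (i : ℕ)
    · refine Subalgebra.smul_mem _ ?_ _
      rw [eS]
      exact sprod_mem_Lr 𝔽 p q r _ fun i hi => hS i (Finset.mem_sort (· ≤ ·) |>.mp hi)
    · push_neg at hS
      obtain ⟨i, hiS, hilt⟩ := hS
      rw [hvanish i hilt S hiS, zero_smul]
      exact zero_mem _
  · intro hX
    refine Algebra.adjoin_induction
      (p := fun x _ => ∀ V ∈ G1 𝔽 p q r, CliffordAlgebra.involute x * V = V * x)
      ?_ ?_ ?_ ?_ hX
    · rintro x ⟨b, hbq, rfl⟩ V hV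
      refine Submodule.span_induction
        (p := fun V _ => CliffordAlgebra.involute (e 𝔽 p q r b) * V = V * e 𝔽 p q r b)
        ?_ ?_ ?_ ?_ hV
      · rintro _ ⟨c, rfl⟩
        rw [involute_e, neg_mul]
        rcases eq_or_ne c b with rfl | hcb
        · rw [e_sq, w_zero 𝔽 p q r hbq, map_zero, neg_zero]
        · rw [e_anticomm 𝔽 p q r (Ne.symm hcb), neg_neg]
      · simp
      · intro x y _ _ hx hy
        rw [mul_add, hx, hy, add_mul]
      · intro c x _ hx
        rw [mul_smul_comm, hx, smul_mul_assoc]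
    · intro c V hV
      rw [AlgHom.commutes, Algebra.commutes]
    · intro x y _ _ hx hy V hV
      rw [map_add, add_mul, hx V hV, hy V hV, mul_add]
    · intro x y _ _ hx hy V hV
      rw [map_mul, mul_assoc, hy V hV, ← mul_assoc, hx V hV, mul_assoc]

end ClGA
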